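/- arXiv:math/0202141 — 2 statements merged into one kernel-verified Lean document; each statement's English description precedes it below -/
import Mathlib

section
/- For every ε > 0 and every x > 0, the limit as n → ∞ of f_{ε,n}(x) := ∑_{a=1}^n (μ(a)/a^ε)·ρ(1/(a x)) exists and equals f_ε(x) := 1/(x·ζ(1+ε)) − ∑_{a ≤ 1/x} (μ(a)/a^ε)·⌊1/(a x)⌋. -/
open ArithmeticFunction Filter MeasureTheory

theorem f_eps_pointwise_limit (ε : ℝ) (hε : 0 < ε) (x : ℝ) (hx : 0 < x) :
    Tendsto
      (fun n : ℕ => ∑ a ∈ Finset.Icc 1 n,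
        ((moebius a : ℂ) / (a:ℂ)^(ε:ℂ)) * (Int.fract (1/((a:ℝ)*x)) : ℝ))
      atTop
      (nhds (1 / ((x:ℂ) * riemannZeta (1+ε)) -
        ∑ a ∈ Finset.Icc 1 ⌊1/x⌋₊,
          ((moebius a : ℂ) / (a:ℂ)^(ε:ℂ)) * (⌊1/((a:ℝ)*x)⌋ : ℤ))) := by
  set s : ℂ := 1 + (ε : ℂ) with hs_def
  have hs : 1 < s.re := by
    simp [hs_def]
    exact hε
  have hsum : LSeriesSummable (fun n => (moebius n : ℂ)) s :=
    ArithmeticFunction.LSeriesSummable_moebius_iff.mpr hs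
  have hzeta : riemannZeta s ≠ 0 := riemannZeta_ne_zero_of_one_lt_re hs
  have hL : LSeries (fun n => (moebius n : ℂ)) s = (riemannZeta s)⁻¹ := by
    have h1 := ArithmeticFunction.LSeries_zeta_mul_Lseries_moebius hs
    rw [LSeries_zeta_eq_riemannZeta hs] at h1
    field_simp
    linear_combination h1
  -- partial sums of L-series
  have htend : Tendsto (fun n : ℕ => ∑ a ∈ Finset.range n,
      LSeries.term (fun n => (moebius n : ℂ)) s a) atTop (nhds ((riemannZeta s)⁻¹)) := by
    rw [← hL]
    exact hsum.hasSum.tendsto_sum_nat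
  have htend2 : Tendsto (fun n : ℕ => (1/(x:ℂ)) * ∑ a ∈ Finset.range (n+1),
      LSeries.term (fun n => (moebius n : ℂ)) s a
      - ∑ a ∈ Finset.Icc 1 ⌊1/x⌋₊,
          ((moebius a : ℂ) / (a:ℂ)^(ε:ℂ)) * (⌊1/((a:ℝ)*x)⌋ : ℤ)) atTop
      (nhds (1 / ((x:ℂ) * riemannZeta (1+ε)) -
        ∑ a ∈ Finset.Icc 1 ⌊1/x⌋₊,
          ((moebius a : ℂ) / (a:ℂ)^(ε:ℂ)) * (⌊1/((a:ℝ)*x)⌋ : ℤ))) := by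
    have : (1 : ℂ) / ((x:ℂ) * riemannZeta (1+ε)) = (1/(x:ℂ)) * (riemannZeta s)⁻¹ := by
      rw [hs_def]
      field_simp
    rw [this]
    exact Tendsto.sub_const ((htend.comp (tendsto_add_atTop_nat 1)).const_mul _) _
  refine htend2.congr' ?_
  filter_upwards [eventually_ge_atTop ⌊1/x⌋₊] with n hn
  have hIcc : Finset.Icc 1 n = Finset.range (n+1) \ {0} := by
    ext a
    simp [Nat.lt_succ_iff, Nat.one_le_iff_ne_zero]
    tauto
  -- first piece
  have h1 : (1/(x:ℂ)) * ∑ a ∈ Finset.range (n+1),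
      LSeries.term (fun n => (moebius n : ℂ)) s a
      = ∑ a ∈ Finset.Icc 1 n, ((moebius a : ℂ) / (a:ℂ)^(ε:ℂ)) * ((1/((a:ℝ)*x) : ℝ) : ℂ) := by
    have hsub : Finset.Icc 1 n ⊆ Finset.range (n+1) := by
      intro a ha
      simp only [Finset.mem_Icc] at ha
      simp [Nat.lt_succ_iff, ha.2]
    have hz : ∀ a ∈ Finset.range (n+1), a ∉ Finset.Icc 1 n →
        LSeries.term (fun n => (moebius n : ℂ)) s a = 0 := by
      intro a ha ha'
      simp only [Finset.mem_range, Finset.mem_Icc, not_and, not_le, Nat.lt_one_iff,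
        Nat.lt_succ_iff] at ha ha'
      rcases Nat.eq_zero_or_pos a with rfl | hpos
      · exact LSeries.term_zero _ _
      · omega
    rw [← Finset.sum_subset hsub hz, Finset.mul_sum]
    refine Finset.sum_congr rfl fun a ha => ?_
    have ha1 : a ≠ 0 := by
      simp only [Finset.mem_Icc] at ha; omega
    rw [LSeries.term_of_ne_zero ha1]
    have hac : (a : ℂ) ≠ 0 := Nat.cast_ne_zero.mpr ha1
    rw [hs_def, Complex.cpow_add _ _ hac, Complex.cpow_one]
    push_cast
    field_simp
  -- second piece
  have h2 : ∑ a ∈ Finset.Icc 1 ⌊1/x⌋₊,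
      ((moebius a : ℂ) / (a:ℂ)^(ε:ℂ)) * (⌊1/((a:ℝ)*x)⌋ : ℤ)
      = ∑ a ∈ Finset.Icc 1 n,
      ((moebius a : ℂ) / (a:ℂ)^(ε:ℂ)) * (⌊1/((a:ℝ)*x)⌋ : ℤ) := by
    refine Finset.sum_subset (Finset.Icc_subset_Icc_right hn) fun a ha ha' => ?_
    simp only [Finset.mem_Icc, not_and, not_le] at ha ha'
    have ha1 : 1 ≤ a := ha.1
    have hfloor : ⌊1/((a:ℝ)*x)⌋ = 0 := by
      rw [Int.floor_eq_zero_iff]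
      have hax : (0:ℝ) < (a:ℝ) * x := by positivity
      constructor
      · positivity
      · rw [one_div, inv_lt_one_iff₀]
        right
        have h1x : 1/x < (a : ℝ) := by
          calc 1/x < ⌊1/x⌋₊ + 1 := Nat.lt_floor_add_one _
          _ ≤ a := by exact_mod_cast Nat.succ_le_of_lt (ha' ha1)
        calc (1:ℝ) = (1/x) * x := by field_simp
        _ < (a:ℝ) * x := by exact mul_lt_mul_of_pos_right h1x hx
      
    rw [hfloor, Int.cast_zero, mul_zero]
  rw [h1, h2, ← Finset.sum_sub_distrib]
  refine Finset.sum_congr rfl fun a _ => ?_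
  rw [← mul_sub]
  congr 1
  rw [Int.fract]
  push_cast
  ring
end

section
/- For every x > 0, lim_{ε → 0⁺} f_ε(x) = −χ(x), where f_ε(x) := 1/(x·ζ(1+ε)) − ∑_{a ≤ 1/x} (μ(a)/a^ε)·⌊1/(a x)⌋ and χ is the characteristic function of the interval (0,1]. -/
open ArithmeticFunction Filter

lemma moebius_floor_sum (N : ℕ) :
    ∑ a ∈ Finset.Icc 1 N, (moebius a : ℤ) * (N / a : ℕ) =
      if 1 ≤ N then 1 else 0 := by
  have h2 : Finset.Icc 1 N = Finset.Ioc 0 N := by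
    ext n; simp [Nat.lt_iff_add_one_le]
  calc ∑ a ∈ Finset.Icc 1 N, (moebius a : ℤ) * (N / a : ℕ)
      = ∑ a ∈ Finset.Ioc 0 N, ∑ n ∈ Finset.Ioc 0 N,
          if a ∣ n then (moebius a : ℤ) else 0 := by
        rw [h2]
        refine Finset.sum_congr rfl fun a _ => ?_
        rw [← Finset.sum_filter, Finset.sum_const, Nat.Ioc_filter_dvd_card_eq_div,
          nsmul_eq_mul, mul_comm]
    _ = ∑ n ∈ Finset.Ioc 0 N, ∑ a ∈ Finset.Ioc 0 N,
          if a ∣ n then (moebius a : ℤ) else 0 := Finset.sum_comm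
    _ = ∑ n ∈ Finset.Ioc 0 N, if n = 1 then 1 else 0 := by
        refine Finset.sum_congr rfl fun n hn => ?_
        simp only [Finset.mem_Ioc] at hn
        rw [← Finset.sum_filter]
        have : (Finset.Ioc 0 N).filter (· ∣ n) = n.divisors := by
          ext a
          simp only [Finset.mem_filter, Finset.mem_Ioc, Nat.mem_divisors]
          constructor
          · rintro ⟨_, hd⟩; exact ⟨hd, by omega⟩
          · rintro ⟨hd, _⟩
            exact ⟨⟨Nat.pos_of_dvd_of_pos hd (by omega), le_trans (Nat.le_of_dvd (by omega) hd) hn.2⟩, hd⟩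
        rw [this]
        have h3 : (moebius * (zeta : ArithmeticFunction ℤ) : ArithmeticFunction ℤ) n = (1 : ArithmeticFunction ℤ) n := by
          rw [moebius_mul_coe_zeta]
        rwa [coe_mul_zeta_apply, one_apply] at h3
    _ = if 1 ≤ N then 1 else 0 := by
        rw [Finset.sum_ite_eq' (Finset.Ioc 0 N) 1 (fun _ => (1 : ℤ))]
        simp

theorem f_eps_tendsto_neg_chi (x : ℝ) (hx : 0 < x) :
    Tendsto
      (fun ε : ℝ => 1 / ((x:ℂ) * riemannZeta (1+ε)) -
        ∑ a ∈ Finset.Icc 1 ⌊1/x⌋₊,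
          ((moebius a : ℂ) / (a:ℂ)^(ε:ℂ)) * (⌊1/((a:ℝ)*x)⌋ : ℤ))
      (nhdsWithin 0 (Set.Ioi 0))
      (nhds (- if x ≤ 1 then 1 else 0)) := by
  set N := ⌊1/x⌋₊ with hN
  -- Part 1: 1/(x ζ(1+ε)) → 0
  have hzeta : Tendsto (fun s : ℂ => 1 / riemannZeta s) (nhdsWithin 1 {(1:ℂ)}ᶜ) (nhds 0) := by
    have h := riemannZeta_residue_one
    have h2 : Tendsto (fun s : ℂ => (s - 1) / ((s - 1) * riemannZeta s))
        (nhdsWithin 1 {(1:ℂ)}ᶜ) (nhds 0) := by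
      have hnum : Tendsto (fun s : ℂ => s - 1) (nhdsWithin 1 {(1:ℂ)}ᶜ) (nhds 0) := by
        have : Tendsto (fun s : ℂ => s - 1) (nhds 1) (nhds 0) := by
          simpa using (continuous_sub_right (1:ℂ)).tendsto 1
        exact this.mono_left nhdsWithin_le_nhds
      simpa [Pi.div_def] using hnum.div h one_ne_zero
    refine h2.congr' ?_
    filter_upwards [self_mem_nhdsWithin] with s hs
    have hs1 : s - 1 ≠ 0 := sub_ne_zero.mpr hs
    rw [div_mul_eq_div_div, div_self hs1]
  have hmap : Tendsto (fun ε : ℝ => 1 + (ε:ℂ)) (nhdsWithin 0 (Set.Ioi 0))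
      (nhdsWithin 1 {(1:ℂ)}ᶜ) := by
    rw [tendsto_nhdsWithin_iff]
    constructor
    · have : Tendsto (fun ε : ℝ => 1 + (ε:ℂ)) (nhds 0) (nhds 1) := by
        have := ((continuous_const (y := (1:ℂ))).add Complex.continuous_ofReal).tendsto (0:ℝ)
        simpa [Pi.add_def] using this
      exact this.mono_left nhdsWithin_le_nhds
    · filter_upwards [self_mem_nhdsWithin] with ε (hε : 0 < ε)
      simp only [Set.mem_compl_iff, Set.mem_singleton_iff]
      intro h
      have : (ε:ℂ) = 0 := by linear_combination h
      exact hε.ne' (by exact_mod_cast this)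
  have hpart1 : Tendsto (fun ε : ℝ => 1 / ((x:ℂ) * riemannZeta (1+ε)))
      (nhdsWithin 0 (Set.Ioi 0)) (nhds 0) := by
    have := (hzeta.comp hmap).const_mul ((x:ℂ)⁻¹)
    simp only [mul_zero] at this
    refine this.congr fun ε => ?_
    simp [Function.comp, one_div, mul_inv, mul_comm]
  -- Part 2: the sum tends to the constant sum at ε = 0
  have hpart2 : Tendsto (fun ε : ℝ => ∑ a ∈ Finset.Icc 1 N,
      ((moebius a : ℂ) / (a:ℂ)^(ε:ℂ)) * (⌊1/((a:ℝ)*x)⌋ : ℤ))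
      (nhdsWithin 0 (Set.Ioi 0))
      (nhds (∑ a ∈ Finset.Icc 1 N, ((moebius a : ℂ)) * (⌊1/((a:ℝ)*x)⌋ : ℤ))) := by
    refine (tendsto_finset_sum _ fun a ha => ?_).mono_left nhdsWithin_le_nhds
    simp only [Finset.mem_Icc] at ha
    have ha0 : (a:ℂ) ≠ 0 := Nat.cast_ne_zero.mpr (by omega)
    have hc : Tendsto (fun ε : ℝ => (a:ℂ)^(ε:ℂ)) (nhds 0) (nhds 1) := by
      have h1 : ContinuousAt (fun z : ℂ => (a:ℂ)^z) 0 := continuousAt_const_cpow ha0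
      have := h1.tendsto.comp (Complex.continuous_ofReal.tendsto 0)
      simpa [Complex.cpow_zero, Function.comp_def] using this
    have hd : Tendsto (fun ε : ℝ => (moebius a : ℂ) / (a:ℂ)^(ε:ℂ)) (nhds 0) (nhds ((moebius a : ℂ) / 1)) :=
      tendsto_const_nhds.div hc one_ne_zero
    have := hd.mul_const (((⌊1/((a:ℝ)*x)⌋ : ℤ) : ℂ))
    simpa using this
  -- Compute the sum value
  have hval : ∑ a ∈ Finset.Icc 1 N, ((moebius a : ℂ)) * (⌊1/((a:ℝ)*x)⌋ : ℤ)
      = if x ≤ 1 then 1 else 0 := by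
    have hfloor : ∀ a ∈ Finset.Icc 1 N, ⌊1/((a:ℝ)*x)⌋ = ((N / a : ℕ) : ℤ) := by
      intro a ha
      simp only [Finset.mem_Icc] at ha
      have : 1/((a:ℝ)*x) = (1/x) / (a:ℕ) := by
        field_simp
      rw [this, ← Int.natCast_floor_eq_floor (by positivity), Nat.floor_div_natCast, ← hN]
    have : ∑ a ∈ Finset.Icc 1 N, ((moebius a : ℂ)) * (⌊1/((a:ℝ)*x)⌋ : ℤ)
        = ((∑ a ∈ Finset.Icc 1 N, (moebius a : ℤ) * (N / a : ℕ) : ℤ) : ℂ) := by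
      push_cast
      refine Finset.sum_congr rfl fun a ha => ?_
      rw [hfloor a ha]; push_cast; ring
    rw [this, moebius_floor_sum]
    have hiff : 1 ≤ N ↔ x ≤ 1 := by
      rw [hN, Nat.one_le_floor_iff, le_div_iff₀ hx, one_mul]
    by_cases hx1 : x ≤ 1
    · simp [hiff.mpr hx1, hx1]
    · have hN0 : ¬ 1 ≤ N := fun h => hx1 (hiff.mp h)
      simp [hx1, hN0]
  have := hpart1.sub hpart2
  rw [hval] at this
  convert this using 2
  by_cases hx1 : x ≤ 1 <;> simp [hx1]
end
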